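/- arXiv:1507.04575 — 6 statements merged into one kernel-verified Lean document; each statement's English description precedes it below -/
import Mathlib

section
/- If λ is an H-eigenvalue of a real m-order n-dimensional tensor A (i.e., there exist a nonzero real vector x and real λ with (A x^{m-1})_i = λ x_i^{m-1} for all i), then there exists an index i with |λ - a_{i...i}| ≤ r_i(A), where r_i(A) is the sum of absolute values of all off-diagonal entries in the i-th row of A. -/
open Finset

section TensorDefs

variable {ι : Type*} [Fintype ι] [DecidableEq ι] {k : ℕ}

/-- diagonal entry `a_{i…i}` of an `(k+1)`-order tensor given by its row slices -/
def diagT (A : ι → (Fin k → ι) → ℝ) (i : ι) : ℝ := A i (fun _ => i)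

/-- the off-diagonal multi-indices of row `i` -/
def offT (k : ℕ) (i : ι) : Finset (Fin k → ι) :=
  Finset.univ.filter (fun t => t ≠ (fun _ => i))

/-- the multi-indices different from `(i,…,i)` and `(j,…,j)` -/
def offT2 (k : ℕ) (i j : ι) : Finset (Fin k → ι) :=
  Finset.univ.filter (fun t => t ≠ (fun _ => i) ∧ t ≠ (fun _ => j))

/-- `r_i(A)` -/
def rT (A : ι → (Fin k → ι) → ℝ) (i : ι) : ℝ := ∑ t ∈ offT k i, |A i t|

/-- `r_j^i(A)` -/
def rT2 (A : ι → (Fin k → ι) → ℝ) (j i : ι) : ℝ := ∑ t ∈ offT2 k i j, |A j t|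

/-- `β_i(A) = max{0, off-diagonal entries of row i}` -/
noncomputable def betaT (A : ι → (Fin k → ι) → ℝ) (i : ι) : ℝ :=
  (insert (0:ℝ) ((offT k i).image (A i))).max' (Finset.insert_nonempty _ _)

/-- `γ_i(A) = min{0, off-diagonal entries of row i}` -/
noncomputable def gammaT (A : ι → (Fin k → ι) → ℝ) (i : ι) : ℝ :=
  (insert (0:ℝ) ((offT k i).image (A i))).min' (Finset.insert_nonempty _ _)

/-- `Δ_i(A)` -/
noncomputable def deltaT (A : ι → (Fin k → ι) → ℝ) (i : ι) : ℝ :=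
  ∑ t ∈ offT k i, (betaT A i - A i t)

/-- `Θ_i(A)` -/
noncomputable def thetaT (A : ι → (Fin k → ι) → ℝ) (i : ι) : ℝ :=
  ∑ t ∈ offT k i, (A i t - gammaT A i)

/-- `Δ_j^i(A)` -/
noncomputable def deltaT2 (A : ι → (Fin k → ι) → ℝ) (j i : ι) : ℝ :=
  ∑ t ∈ offT2 k i j, (betaT A j - A j t)

/-- `Θ_j^i(A)` -/
noncomputable def thetaT2 (A : ι → (Fin k → ι) → ℝ) (j i : ι) : ℝ :=
  ∑ t ∈ offT2 k i j, (A j t - gammaT A j)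

/-- `Ā`: the `k`-th row tensor of `A` multiplied by `sign(a_{k…k})` -/
noncomputable def barT (A : ι → (Fin k → ι) → ℝ) : ι → (Fin k → ι) → ℝ :=
  fun i t => Real.sign (diagT A i) * A i t

/-- double `B`-tensor -/
def DoubleB (A : ι → (Fin k → ι) → ℝ) : Prop :=
  (∀ i, betaT A i < diagT A i) ∧
  (∀ i, deltaT A i ≤ diagT A i - betaT A i) ∧
  (∀ i j, i ≠ j → deltaT A i * deltaT A j <
    (diagT A i - betaT A i) * (diagT A j - betaT A j))

/-- quasi-double `B`-tensor -/
def QuasiDoubleB (A : ι → (Fin k → ι) → ℝ) : Prop :=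
  (∀ i, betaT A i < diagT A i) ∧
  ∀ i j, i ≠ j → (betaT A i - A j (fun _ => i)) * deltaT A j <
    (diagT A i - betaT A i) * (diagT A j - betaT A j - deltaT2 A j i)

/-- symmetric tensor of order `k+1` (row form) -/
def SymT (A : ι → (Fin k → ι) → ℝ) : Prop :=
  ∀ σ : Equiv.Perm (Fin (k+1)), ∀ t : Fin (k+1) → ι,
    A ((t ∘ σ) 0) (Fin.tail (t ∘ σ)) = A (t 0) (Fin.tail t)

end TensorDefs

/-- Gerschgorin-type bound for H-eigenvalues (order `k+1`). -/
theorem stmt0 {n k : ℕ} (A : Fin n → (Fin k → Fin n) → ℝ) (lam : ℝ) (x : Fin n → ℝ)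
    (hx : x ≠ 0)
    (heig : ∀ i, (∑ t : Fin k → Fin n, A i t * ∏ s, x (t s)) = lam * x i ^ k) :
    ∃ i, |lam - diagT A i| ≤ rT A i := by
  have hne : ∃ j, x j ≠ 0 := by
    by_contra h; push_neg at h; exact hx (funext h)
  obtain ⟨j0, hj0⟩ := hne
  have : Nonempty (Fin n) := ⟨j0⟩
  obtain ⟨i, -, hi⟩ := Finset.exists_max_image Finset.univ (fun j => |x j|) ⟨j0, mem_univ _⟩
  have hxi : 0 < |x i| := lt_of_lt_of_le (abs_pos.mpr hj0) (hi j0 (mem_univ _))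
  refine ⟨i, ?_⟩
  have hsplit : (∑ t : Fin k → Fin n, A i t * ∏ s, x (t s))
      = A i (fun _ => i) * x i ^ k + ∑ t ∈ offT k i, A i t * ∏ s, x (t s) := by
    rw [← Finset.sum_filter_add_sum_filter_not Finset.univ (fun t => t = (fun _ => i))]
    congr 1
    · rw [Finset.sum_eq_single (fun _ => i : Fin k → Fin n)]
      · simp [Finset.prod_const]
      · intro t ht hne; simp at ht; exact absurd ht hne
      · simp
  have key : (lam - diagT A i) * x i ^ k = ∑ t ∈ offT k i, A i t * ∏ s, x (t s) := by
    have := heig i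
    rw [hsplit] at this
    unfold diagT
    linarith
  have h1 : |lam - diagT A i| * |x i| ^ k ≤ rT A i * |x i| ^ k := by
    calc |lam - diagT A i| * |x i| ^ k = |(lam - diagT A i) * x i ^ k| := by
          rw [abs_mul, abs_pow]
      _ = |∑ t ∈ offT k i, A i t * ∏ s, x (t s)| := by rw [key]
      _ ≤ ∑ t ∈ offT k i, |A i t * ∏ s, x (t s)| := Finset.abs_sum_le_sum_abs _ _
      _ ≤ ∑ t ∈ offT k i, |A i t| * |x i| ^ k := by
          refine Finset.sum_le_sum fun t _ => ?_
          rw [abs_mul]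
          refine mul_le_mul_of_nonneg_left ?_ (abs_nonneg _)
          calc |∏ s, x (t s)| = ∏ s, |x (t s)| := by rw [Finset.abs_prod]
            _ ≤ ∏ s : Fin k, |x i| := Finset.prod_le_prod (fun _ _ => abs_nonneg _)
                (fun s _ => hi (t s) (mem_univ _))
            _ = |x i| ^ k := by simp [Finset.prod_const]
      _ = rT A i * |x i| ^ k := by rw [rT, Finset.sum_mul]
  exact le_of_mul_le_mul_right h1 (pow_pos hxi k)
end

section
/- If λ is an H-eigenvalue of a real m-order n-dimensional tensor A with n ≥ 2, then there exist distinct indices i, j such that |λ - a_{i...i}|·(|λ - a_{j...j}| - r_j^i(A)) ≤ r_i(A)·|a_{j i...i}|, where r_j^i(A) = r_j(A) - |a_{j i...i}|. -/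
open Finset

/-- Brauer-type bound for H-eigenvalues (order `k+1`). -/
theorem stmt1 {n k : ℕ} (hn : 2 ≤ n) (A : Fin n → (Fin k → Fin n) → ℝ) (lam : ℝ)
    (x : Fin n → ℝ) (hx : x ≠ 0)
    (heig : ∀ i, (∑ t : Fin k → Fin n, A i t * ∏ s, x (t s)) = lam * x i ^ k) :
    ∃ i j, i ≠ j ∧
      |lam - diagT A i| * (|lam - diagT A j| - rT2 A j i) ≤ rT A i * |A j (fun _ => i)| := by
  classical
  have hne : (Finset.univ : Finset (Fin n)).Nonempty := ⟨⟨0, by omega⟩, Finset.mem_univ _⟩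
  obtain ⟨t, -, ht⟩ := Finset.exists_max_image Finset.univ (fun i => |x i|) hne
  have hxt : 0 < |x t| := by
    obtain ⟨l, hl⟩ := Function.ne_iff.mp hx
    exact lt_of_lt_of_le (abs_pos.mpr hl) (ht l (Finset.mem_univ l))
  have : Nontrivial (Fin n) := ⟨⟨⟨0, by omega⟩, ⟨1, by omega⟩, by simp [Fin.ext_iff]⟩⟩
  obtain ⟨s, hst⟩ := exists_ne t
  refine ⟨s, t, hst, ?_⟩
  rcases Nat.eq_zero_or_pos k with hk | hk
  · -- degenerate order: k = 0
    subst hk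
    have hconst : ∀ i : Fin n, (fun _ => i : Fin 0 → Fin n) = (fun _ => s) :=
      fun i => Subsingleton.elim _ _
    have hdiag : diagT A s = lam := by
      have h := heig s
      simp only [pow_zero, mul_one] at h
      rw [← h, diagT]
      rw [Fintype.sum_unique (fun δ : Fin 0 → Fin n => A s δ * ∏ r, x (δ r))]
      simp [Subsingleton.elim (fun _ => s : Fin 0 → Fin n) default]
    have hoff : offT 0 s = (∅ : Finset (Fin 0 → Fin n)) := by
      rw [offT, Finset.filter_eq_empty_iff]
      intro δ _
      simp [Subsingleton.elim δ (fun _ => s : Fin 0 → Fin n)]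
    have hrT : rT A s = 0 := by rw [rT, hoff]; simp
    rw [hdiag, hrT]
    simp
  · -- main case: k ≥ 1
    set ct : Fin k → Fin n := fun _ => t with hct
    set cs : Fin k → Fin n := fun _ => s with hcs
    have hcst : cs ≠ ct := by
      intro h
      exact hst (congrFun h ⟨0, hk⟩)
    have prodbound : ∀ δ : Fin k → Fin n, |∏ r, x (δ r)| ≤ |x t| ^ k := by
      intro δ
      rw [Finset.abs_prod]
      calc ∏ r, |x (δ r)| ≤ ∏ _r : Fin k, |x t| :=
            Finset.prod_le_prod (fun r _ => abs_nonneg _) (fun r _ => ht _ (Finset.mem_univ _))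
        _ = |x t| ^ k := by simp
    have sumbound : ∀ (j : Fin n) (S : Finset (Fin k → Fin n)),
        |∑ δ ∈ S, A j δ * ∏ r, x (δ r)| ≤ (∑ δ ∈ S, |A j δ|) * |x t| ^ k := by
      intro j S
      calc |∑ δ ∈ S, A j δ * ∏ r, x (δ r)| ≤ ∑ δ ∈ S, |A j δ * ∏ r, x (δ r)| :=
            Finset.abs_sum_le_sum_abs _ _
        _ = ∑ δ ∈ S, |A j δ| * |∏ r, x (δ r)| := by simp [abs_mul]
        _ ≤ ∑ δ ∈ S, |A j δ| * |x t| ^ k :=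
            Finset.sum_le_sum (fun δ _ => mul_le_mul_of_nonneg_left (prodbound δ) (abs_nonneg _))
        _ = (∑ δ ∈ S, |A j δ|) * |x t| ^ k := (Finset.sum_mul _ _ _).symm
    have prodconst : ∀ i : Fin n, (∏ r : Fin k, x ((fun _ => i : Fin k → Fin n) r)) = x i ^ k := by
      intro i; simp
    -- row s
    have split_s : (lam - diagT A s) * x s ^ k = ∑ δ ∈ offT k s, A s δ * ∏ r, x (δ r) := by
      have h := heig s
      have hoff : offT k s = Finset.univ.erase cs := by
        rw [offT]; exact Finset.filter_ne' _ _
      have hsum : A s cs * (∏ r, x (cs r)) + ∑ δ ∈ univ.erase cs, A s δ * ∏ r, x (δ r)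
          = ∑ δ : Fin k → Fin n, A s δ * ∏ r, x (δ r) := by
        exact Finset.add_sum_erase Finset.univ
          (fun δ : Fin k → Fin n => A s δ * ∏ r, x (δ r)) (Finset.mem_univ cs)
      rw [hoff]
      have hx2 : A s cs * ∏ r, x (cs r) = diagT A s * x s ^ k := by
        rw [diagT, ← hcs, prodconst s]
      linarith [hsum, h, hx2]
    have ineq_s : |lam - diagT A s| * |x s| ^ k ≤ rT A s * |x t| ^ k := by
      have h1 : |(lam - diagT A s) * x s ^ k| = |lam - diagT A s| * |x s| ^ k := by
        rw [abs_mul, abs_pow]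
      rw [← h1, split_s, rT]
      exact sumbound s _
    -- row t: split off ct and cs
    have hsplitset : (Finset.univ : Finset (Fin k → Fin n)) = insert ct (insert cs (offT2 k s t)) := by
      ext δ
      simp only [Finset.mem_univ, Finset.mem_insert, offT2, Finset.mem_filter, true_iff, true_and]
      by_cases h1 : δ = ct
      · tauto
      · by_cases h2 : δ = cs <;> tauto
    have hctni : ct ∉ insert cs (offT2 k s t) := by
      intro h
      rcases Finset.mem_insert.mp h with h | h
      · exact hcst h.symm
      · rw [offT2, Finset.mem_filter] at h
        exact h.2.2 rfl
    have hcsni : cs ∉ offT2 k s t := by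
      intro h
      rw [offT2, Finset.mem_filter] at h
      exact h.2.1 rfl
    have split_t : (lam - diagT A t) * x t ^ k - A t cs * x s ^ k
        = ∑ δ ∈ offT2 k s t, A t δ * ∏ r, x (δ r) := by
      have h := heig t
      rw [hsplitset, Finset.sum_insert hctni, Finset.sum_insert hcsni] at h
      have e1 : A t ct * ∏ r, x (ct r) = diagT A t * x t ^ k := by
        rw [diagT, ← hct, prodconst t]
      have e2 : A t cs * ∏ r, x (cs r) = A t cs * x s ^ k := by
        rw [prodconst s]
      linarith [h, e1, e2]
    have ineq_t : |lam - diagT A t| * |x t| ^ k - |A t cs| * |x s| ^ k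
        ≤ rT2 A t s * |x t| ^ k := by
      have h1 : |lam - diagT A t| * |x t| ^ k - |A t cs| * |x s| ^ k
          ≤ |(lam - diagT A t) * x t ^ k - A t cs * x s ^ k| := by
        have := abs_sub_abs_le_abs_sub ((lam - diagT A t) * x t ^ k) (A t cs * x s ^ k)
        rw [abs_mul, abs_mul, abs_pow, abs_pow] at this
        exact this
      refine h1.trans ?_
      rw [split_t, rT2]
      exact sumbound t _
    -- final algebra
    have hu : 0 < |x t| ^ k := pow_pos hxt k
    have hv : 0 ≤ |x s| ^ k := pow_nonneg (abs_nonneg _) k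
    have hR : 0 ≤ rT A s := Finset.sum_nonneg (fun δ _ => abs_nonneg _)
    have hP : 0 ≤ |lam - diagT A s| := abs_nonneg _
    have ha : 0 ≤ |A t cs| := abs_nonneg _
    rcases le_or_gt (|lam - diagT A t| - rT2 A t s) 0 with hc | hc
    · exact (mul_nonpos_of_nonneg_of_nonpos hP hc).trans (mul_nonneg hR ha)
    · have H2 : (|lam - diagT A t| - rT2 A t s) * |x t| ^ k ≤ |A t cs| * |x s| ^ k := by
        nlinarith [ineq_t]
      have hcu : 0 < (|lam - diagT A t| - rT2 A t s) * |x t| ^ k := mul_pos hc hu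
      have hvpos : 0 < |x s| ^ k := by nlinarith [H2, hcu]
      have key := mul_le_mul ineq_s H2 hcu.le (mul_nonneg hR hu.le)
      nlinarith [key, mul_pos hvpos hu]
end

section
/- Let A be a real m-order n-dimensional symmetric tensor with m even, positive diagonal entries a_{i...i} > 0 for all i, and suppose A is doubly strictly diagonally dominant: |a_{i...i}||a_{j...j}| > r_i(A) r_j(A) for all i ≠ j, and (when m > 2) |a_{i...i}| ≥ r_i(A) for all i. Then A is positive definite, i.e., A x^m > 0 for all nonzero x ∈ ℝ^n. -/
open Finset

section AMGM
lemma amgm {m : ℕ} (hm : 0 < m) (y : Fin m → ℝ) (hy : ∀ s, 0 ≤ y s) :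
    ∏ s, y s ≤ (∑ s, y s ^ m) / m := by
  have h := Real.geom_mean_le_arith_mean_weighted univ (fun _ : Fin m => (m:ℝ)⁻¹)
    (fun s => y s ^ m) (fun i _ => by simp)
    (by simp [Finset.card_univ]; field_simp) (fun i _ => pow_nonneg (hy i) m)
  have hL : ∏ s : Fin m, (y s ^ m) ^ ((m:ℝ)⁻¹) = ∏ s, y s := by
    refine Finset.prod_congr rfl fun s _ => ?_
    rw [← Real.rpow_natCast (y s) m, ← Real.rpow_mul (hy s),
      mul_inv_cancel₀ (by exact_mod_cast hm.ne'), Real.rpow_one]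
  rw [hL] at h
  calc ∏ s, y s ≤ ∑ s : Fin m, (m:ℝ)⁻¹ * y s ^ m := h
    _ = (∑ s, y s ^ m) / m := by rw [← Finset.mul_sum]; ring
end AMGM

section Helpers
variable {n k : ℕ}

/-- the nonconstant multi-indices -/
def ncS (n k : ℕ) : Finset (Fin (k+1) → Fin n) :=
  univ.filter (fun t => ¬ ∀ s, t s = t 0)

lemma const_iff' (t : Fin (k+1) → Fin n) :
    (∀ s, t s = t 0) ↔ ∀ s s', t s = t s' :=
  ⟨fun h s s' => (h s).trans (h s').symm, fun h s => h s 0⟩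

lemma mem_ncS_comp (σ : Equiv.Perm (Fin (k+1))) (t : Fin (k+1) → Fin n) :
    t ∘ σ ∈ ncS n k ↔ t ∈ ncS n k := by
  simp only [ncS, mem_filter, mem_univ, true_and, const_iff']
  constructor
  · intro h h'; exact h fun s s' => h' _ _
  · intro h h'; refine h fun s s' => ?_
    have := h' (σ.symm s) (σ.symm s')
    simpa using this

lemma sum_split (F : (Fin (k+1) → Fin n) → ℝ) :
    ∑ t, F t = ∑ i, F (fun _ => i) + ∑ t ∈ ncS n k, F t := by
  have h := Finset.sum_filter_add_sum_filter_not univ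
    (fun t : Fin (k+1) → Fin n => ∀ s, t s = t 0) (f := F)
  rw [← h]
  have h2 : ∑ t ∈ filter (fun t => ∀ s, t s = t 0) univ, F t = ∑ i, F (fun _ => i) := by
    refine Finset.sum_bij' (fun t _ => t 0) (fun i _ => fun _ => i) ?_ ?_ ?_ ?_ ?_
    · intro t ht; exact mem_univ _
    · intro i _; simp
    · intro t ht
      simp only [mem_filter] at ht
      funext s; exact (ht.2 s).symm
    · intro i _; rfl
    · intro t ht
      simp only [mem_filter] at ht
      congr 1; funext s; exact (ht.2 s)
  rw [h2]; rfl

lemma sum_reindex (σ : Equiv.Perm (Fin (k+1))) (F : (Fin (k+1) → Fin n) → ℝ) :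
    ∑ t ∈ ncS n k, F t = ∑ t ∈ ncS n k, F (t ∘ σ) := by
  refine (Finset.sum_bij' (fun (t : Fin (k+1) → Fin n) (_ : t ∈ ncS n k) => t ∘ σ)
    (fun (t : Fin (k+1) → Fin n) (_ : t ∈ ncS n k) => t ∘ σ.symm) ?_ ?_ ?_ ?_ ?_).symm
  · intro t ht; exact (mem_ncS_comp σ t).mpr ht
  · intro t ht; exact (mem_ncS_comp σ.symm t).mpr ht
  · intro t _; funext s; simp
  · intro t _; funext s; simp
  · intro t _; rfl

lemma sum_fiber (A : Fin n → (Fin k → Fin n) → ℝ) (i : Fin n) :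
    ∑ t ∈ (ncS n k).filter (fun t => t 0 = i), |A (t 0) (Fin.tail t)| = rT A i := by
  unfold rT offT
  refine Finset.sum_bij' (fun t _ => Fin.tail t) (fun t' _ => Fin.cons i t') ?_ ?_ ?_ ?_ ?_
  · intro t ht
    simp only [mem_filter, ncS, mem_univ, true_and] at ht ⊢
    intro hc
    refine ht.1 fun s => ?_
    refine Fin.cases (by rw [ht.2]) (fun s' => ?_) s
    have h1 : Fin.tail t s' = i := by rw [hc]
    show Fin.tail t s' = t 0
    rw [ht.2, h1]
  · intro t' ht'
    simp only [mem_filter, ncS, mem_univ, true_and] at ht' ⊢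
    refine ⟨fun hc => ht' ?_, ?_⟩
    · funext s
      have := hc s.succ
      simpa [Fin.cons_succ, Fin.cons_zero] using this
    · simp
  · intro t ht
    simp only [mem_filter] at ht
    show Fin.cons i (Fin.tail t) = t
    rw [← ht.2]
    exact Fin.cons_self_tail t
  · intro t' _
    beta_reduce
    exact Fin.tail_cons (α := fun _ => Fin n) i t'
  · intro t ht
    simp only [mem_filter] at ht
    rw [ht.2]

end Helpers

section MatCase
variable {n : ℕ}

/-- off-diagonal absolute row sum of a matrix -/
noncomputable def rowR (B : Fin n → Fin n → ℝ) (i : Fin n) : ℝ :=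
  ∑ j ∈ univ.erase i, |B i j|

lemma rowR_nonneg (B : Fin n → Fin n → ℝ) (i : Fin n) : 0 ≤ rowR B i :=
  Finset.sum_nonneg fun _ _ => abs_nonneg _

lemma abs_le_rowR (B : Fin n → Fin n → ℝ) {i j : Fin n} (h : j ≠ i) :
    |B i j| ≤ rowR B i := by
  rw [rowR]
  exact Finset.single_le_sum (f := fun j => |B i j|) (fun _ _ => abs_nonneg _)
    (Finset.mem_erase.mpr ⟨h, mem_univ _⟩)

/-- existence of a positive scaling vector for a DSDD matrix -/
lemma matW (B : Fin n → Fin n → ℝ) (hd : ∀ i, 0 < B i i)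
    (hr : ∀ i j, i ≠ j → rowR B i * rowR B j < B i i * B j j) :
    ∃ w : Fin n → ℝ, (∀ i, 0 < w i) ∧
      ∀ i, ∑ j ∈ univ.erase i, |B i j| * w j < B i i * w i := by
  by_cases hall : ∀ i, rowR B i < B i i
  · exact ⟨fun _ => 1, fun _ => one_pos, fun i => by
      simpa [rowR] using hall i⟩
  · push_neg at hall
    obtain ⟨p, hp⟩ := hall
    have hrp : 0 < rowR B p := lt_of_lt_of_le (hd p) hp
    have hlt : ∀ i, i ≠ p → rowR B i < B i i := by
      intro i hi
      have h1 := hr i p hi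
      nlinarith [rowR_nonneg B i, hd i, hd p]
    have key : ∀ i, i ≠ p → rowR B p * |B i p| < B p p * (B i i - rowR B i + |B i p|) := by
      intro i hi
      have h1 := hr i p hi
      have h2 : |B i p| ≤ rowR B i := abs_le_rowR B (Ne.symm hi)
      nlinarith [mul_nonneg (sub_nonneg.2 h2) (sub_nonneg.2 hp), hd p, hd i,
        abs_nonneg (B i p)]
    classical
    set T : Finset (Fin n) := (univ.erase p).filter (fun i => B i p ≠ 0) with hT
    have hcex : ∃ c : ℝ, rowR B p / B p p < c ∧ 0 < c ∧
        ∀ i ∈ T, c < (B i i - rowR B i + |B i p|) / |B i p| := by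
      by_cases hTne : T.Nonempty
      · refine ⟨(rowR B p / B p p +
          T.inf' hTne (fun i => (B i i - rowR B i + |B i p|) / |B i p|)) / 2, ?_, ?_, ?_⟩
        · have hlow : rowR B p / B p p <
              T.inf' hTne (fun i => (B i i - rowR B i + |B i p|) / |B i p|) := by
            rw [Finset.lt_inf'_iff]
            intro i hiT
            simp only [hT, mem_filter, Finset.mem_erase] at hiT
            have hb : 0 < |B i p| := abs_pos.mpr hiT.2
            rw [div_lt_div_iff₀ (hd p) hb]
            have := key i hiT.1.1
            nlinarith
          linarith
        · have h0 : 0 < rowR B p / B p p := div_pos hrp (hd p)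
          have hlow : rowR B p / B p p <
              T.inf' hTne (fun i => (B i i - rowR B i + |B i p|) / |B i p|) := by
            rw [Finset.lt_inf'_iff]
            intro i hiT
            simp only [hT, mem_filter, Finset.mem_erase] at hiT
            have hb : 0 < |B i p| := abs_pos.mpr hiT.2
            rw [div_lt_div_iff₀ (hd p) hb]
            have := key i hiT.1.1
            nlinarith
          linarith
        · intro i hiT
          have hlow : rowR B p / B p p <
              T.inf' hTne (fun i => (B i i - rowR B i + |B i p|) / |B i p|) := by
            rw [Finset.lt_inf'_iff]
            intro i hiT
            simp only [hT, mem_filter, Finset.mem_erase] at hiT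
            have hb : 0 < |B i p| := abs_pos.mpr hiT.2
            rw [div_lt_div_iff₀ (hd p) hb]
            have := key i hiT.1.1
            nlinarith
          have := Finset.inf'_le (fun i => (B i i - rowR B i + |B i p|) / |B i p|) hiT
          linarith
      · refine ⟨rowR B p / B p p + 1, by linarith, ?_, ?_⟩
        · have h0 : 0 < rowR B p / B p p := div_pos hrp (hd p)
          linarith
        · intro i hiT; exact absurd ⟨i, hiT⟩ hTne
    obtain ⟨c, hc1, hc0, hc2⟩ := hcex
    refine ⟨fun i => if i = p then c else 1, fun i => by dsimp; split <;> [exact hc0; exact one_pos], ?_⟩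
    intro i
    by_cases hip : i = p
    · subst hip
      have : ∑ j ∈ univ.erase i, |B i j| * (if j = i then c else 1) = rowR B i := by
        refine Finset.sum_congr rfl fun j hj => ?_
        rw [if_neg (Finset.mem_erase.mp hj).1, mul_one]
      rw [this]
      simp only [if_pos rfl, if_true]
      rw [div_lt_iff₀ (hd i)] at hc1
      linarith [hc1]
    · -- i ≠ p
      have hpmem : p ∈ univ.erase i := Finset.mem_erase.mpr ⟨fun h => hip h.symm, mem_univ _⟩
      have hsplit : ∑ j ∈ univ.erase i, |B i j| * (if j = p then c else 1)
          = |B i p| * c + ∑ j ∈ (univ.erase i).erase p, |B i j| := by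
        rw [← Finset.add_sum_erase _ _ hpmem]
        simp only [if_pos rfl]
        congr 1
        refine Finset.sum_congr rfl fun j hj => ?_
        rw [if_neg (Finset.mem_erase.mp hj).1, mul_one]
      have hrsplit : rowR B i = |B i p| + ∑ j ∈ (univ.erase i).erase p, |B i j| := by
        rw [rowR, ← Finset.add_sum_erase _ _ hpmem]
      rw [hsplit]
      simp only [if_neg hip, mul_one]
      by_cases hBip : B i p = 0
      · simp only [hBip, abs_zero, zero_mul, zero_add]
        have := hlt i hip
        linarith [hrsplit, abs_nonneg (B i p)]
      · have hiT : i ∈ T := by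
          simp only [hT, mem_filter, Finset.mem_erase]
          exact ⟨⟨hip, mem_univ _⟩, hBip⟩
        have hc := hc2 i hiT
        have hb : 0 < |B i p| := abs_pos.mpr hBip
        rw [lt_div_iff₀ hb] at hc
        nlinarith [hc, hrsplit, hb]

end MatCase

section MatCase2
variable {n : ℕ}

lemma offdiag_swap (g : Fin n → Fin n → ℝ) :
    ∑ i, ∑ j ∈ univ.erase i, g i j = ∑ i, ∑ j ∈ univ.erase i, g j i := by
  rw [Finset.sum_comm' (s' := fun j => univ.erase j) (t' := univ)]
  intro x y
  simp only [mem_univ, Finset.mem_erase, true_and, and_true]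
  exact ⟨fun h => h.symm, fun h => h.symm⟩

/-- a symmetric DSDD matrix with positive diagonal is positive definite -/
lemma matPD (B : Fin n → Fin n → ℝ) (hBsym : ∀ i j, B i j = B j i)
    (hd : ∀ i, 0 < B i i)
    (hr : ∀ i j, i ≠ j → rowR B i * rowR B j < B i i * B j j)
    (x : Fin n → ℝ) (hx : x ≠ 0) :
    0 < ∑ i, ∑ j, B i j * (x i * x j) := by
  obtain ⟨w, hw, hS⟩ := matW B hd hr
  set y : Fin n → ℝ := fun i => |x i| with hy
  obtain ⟨q, hq⟩ := Function.ne_iff.mp hx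
  have hyq : 0 < y q := abs_pos.mpr hq
  have step1 : ∑ i, ∑ j, B i j * (x i * x j) ≥
      ∑ i, B i i * y i ^ 2 - ∑ i, ∑ j ∈ univ.erase i, |B i j| * (y i * y j) := by
    have hrow : ∀ i, ∑ j, B i j * (x i * x j) ≥
        B i i * y i ^ 2 - ∑ j ∈ univ.erase i, |B i j| * (y i * y j) := by
      intro i
      rw [← Finset.add_sum_erase _ _ (mem_univ i)]
      have h1 : B i i * (x i * x i) = B i i * y i ^ 2 := by
        rw [hy]; rw [sq_abs]; ring_nf
      rw [h1]
      have h2 : ∀ j ∈ univ.erase i, -(|B i j| * (y i * y j)) ≤ B i j * (x i * x j) := by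
        intro j _
        have habs : |B i j * (x i * x j)| = |B i j| * (y i * y j) := by
          rw [abs_mul, abs_mul]
        rw [← habs]
        exact neg_abs_le _
      have h3 := Finset.sum_le_sum h2
      rw [Finset.sum_neg_distrib] at h3
      linarith
    calc ∑ i, ∑ j, B i j * (x i * x j)
        ≥ ∑ i, (B i i * y i ^ 2 - ∑ j ∈ univ.erase i, |B i j| * (y i * y j)) :=
        Finset.sum_le_sum (fun i _ => hrow i)
      _ = _ := Finset.sum_sub_distrib _ _
  set E1 := ∑ i, ∑ j ∈ univ.erase i, |B i j| * (w j / w i) * y i ^ 2 with hE1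
  set E2 := ∑ i, ∑ j ∈ univ.erase i, |B i j| * (w i / w j) * y j ^ 2 with hE2
  have hE : E2 = E1 := by
    rw [hE2, offdiag_swap (g := fun i j => |B i j| * (w i / w j) * y j ^ 2)]
    exact Finset.sum_congr rfl fun i _ => Finset.sum_congr rfl fun j _ => by
      rw [hBsym j i]
  have step2 : ∑ i, ∑ j ∈ univ.erase i, |B i j| * (y i * y j) ≤ E1 := by
    have hpt : ∀ i : Fin n, ∀ j ∈ univ.erase i, |B i j| * (y i * y j) ≤
        (|B i j| * (w j / w i) * y i ^ 2 + |B i j| * (w i / w j) * y j ^ 2) / 2 := by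
      intro i j _
      have hwi := hw i
      have hwj := hw j
      have hq : (w j / w i) * y i ^ 2 + (w i / w j) * y j ^ 2 - 2 * (y i * y j)
          = (w j * y i - w i * y j) ^ 2 / (w i * w j) := by
        field_simp
        ring
      have h5 : y i * y j ≤ ((w j / w i) * y i ^ 2 + (w i / w j) * y j ^ 2) / 2 := by
        have h6 : 0 ≤ (w j * y i - w i * y j) ^ 2 / (w i * w j) :=
          div_nonneg (sq_nonneg _) (le_of_lt (mul_pos hwi hwj))
        linarith
      have h7 := mul_le_mul_of_nonneg_left h5 (abs_nonneg (B i j))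
      calc |B i j| * (y i * y j) ≤
          |B i j| * (((w j / w i) * y i ^ 2 + (w i / w j) * y j ^ 2) / 2) := h7
        _ = (|B i j| * (w j / w i) * y i ^ 2 + |B i j| * (w i / w j) * y j ^ 2) / 2 := by
            ring
    calc ∑ i, ∑ j ∈ univ.erase i, |B i j| * (y i * y j)
        ≤ ∑ i, ∑ j ∈ univ.erase i,
          (|B i j| * (w j / w i) * y i ^ 2 + |B i j| * (w i / w j) * y j ^ 2) / 2 :=
          Finset.sum_le_sum fun i _ => Finset.sum_le_sum (hpt i)
      _ = (E1 + E2) / 2 := by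
          rw [hE1, hE2, ← Finset.sum_add_distrib, Finset.sum_div]
          refine Finset.sum_congr rfl fun i _ => ?_
          rw [← Finset.sum_add_distrib, ← Finset.sum_div]
      _ = E1 := by rw [hE]; ring
  have hE1eq : E1 = ∑ i, (y i ^ 2 / w i) * ∑ j ∈ univ.erase i, |B i j| * w j := by
    rw [hE1]
    refine Finset.sum_congr rfl fun i _ => ?_
    rw [Finset.mul_sum]
    exact Finset.sum_congr rfl fun j _ => by ring
  have hlast : ∑ i, (y i ^ 2 / w i) * ∑ j ∈ univ.erase i, |B i j| * w j
      < ∑ i, B i i * y i ^ 2 := by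
    refine Finset.sum_lt_sum (fun i _ => ?_) ⟨q, mem_univ q, ?_⟩
    · have h8 : 0 ≤ y i ^ 2 / w i := div_nonneg (sq_nonneg _) (le_of_lt (hw i))
      have h9 := mul_le_mul_of_nonneg_left (le_of_lt (hS i)) h8
      calc (y i ^ 2 / w i) * ∑ j ∈ univ.erase i, |B i j| * w j
          ≤ (y i ^ 2 / w i) * (B i i * w i) := h9
        _ = B i i * y i ^ 2 := by
            rw [show y i ^ 2 / w i * (B i i * w i) = B i i * y i ^ 2 * (w i / w i) by ring,
              div_self (ne_of_gt (hw i)), mul_one]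
    · have h8 : 0 < y q ^ 2 / w q := div_pos (pow_pos hyq 2) (hw q)
      have h9 := mul_lt_mul_of_pos_left (hS q) h8
      calc (y q ^ 2 / w q) * ∑ j ∈ univ.erase q, |B q j| * w j
          < (y q ^ 2 / w q) * (B q q * w q) := h9
        _ = B q q * y q ^ 2 := by
            rw [show y q ^ 2 / w q * (B q q * w q) = B q q * y q ^ 2 * (w q / w q) by ring,
              div_self (ne_of_gt (hw q)), mul_one]
  have := hE1eq ▸ hlast
  linarith [step1, step2, this]

end MatCase2

/-- An even-order symmetric DSDD tensor with positive diagonal is positive definite. -/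
theorem stmt3 {n k : ℕ} (A : Fin n → (Fin k → Fin n) → ℝ)
    (hev : Even (k + 1)) (hsym : SymT A)
    (hdiag : ∀ i, 0 < diagT A i)
    (hdsdd1 : ∀ i j, i ≠ j → rT A i * rT A j < |diagT A i| * |diagT A j|)
    (hdsdd2 : 2 < k + 1 → ∀ i, rT A i ≤ |diagT A i|)
    (x : Fin n → ℝ) (hx : x ≠ 0) :
    0 < ∑ t : Fin (k+1) → Fin n, A (t 0) (Fin.tail t) * ∏ s, x (t s) := by
  classical
  obtain ⟨q, hq⟩ := Function.ne_iff.mp hx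
  simp only [Pi.zero_apply] at hq
  have habs : ∀ i, |diagT A i| = diagT A i := fun i => abs_of_pos (hdiag i)
  set y : Fin n → ℝ := fun i => |x i| with hy
  have hyq : 0 < y q := abs_pos.mpr hq
  rcases Nat.lt_or_ge (k+1) 3 with hk | hk
  · -- the matrix case : k = 1
    have hk01 : k = 0 ∨ k = 1 := by omega
    rcases hk01 with hk0 | hk1
    · subst hk0; exact absurd hev (by decide)
    subst hk1
    set B : Fin n → Fin n → ℝ := fun i j => A i (fun _ => j) with hB
    have hBsym : ∀ i j, B i j = B j i := by
      intro i j
      have h := hsym (Equiv.swap 0 1) ![i, j]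
      have e0 : (![i, j] ∘ ⇑(Equiv.swap (0 : Fin 2) 1)) 0 = j := by
        show ![i, j] ((Equiv.swap (0 : Fin 2) 1) 0) = j
        rw [Equiv.swap_apply_left]; rfl
      have e1 : Fin.tail (![i, j] ∘ ⇑(Equiv.swap (0 : Fin 2) 1)) = (fun _ : Fin 1 => i) := by
        funext s
        have hs : s = 0 := Subsingleton.elim _ _
        subst hs
        show ![i, j] ((Equiv.swap (0 : Fin 2) 1) 1) = i
        rw [Equiv.swap_apply_right]; rfl
      have e2 : Fin.tail ![i, j] = (fun _ : Fin 1 => j) := by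
        funext s
        have hs : s = 0 := Subsingleton.elim _ _
        subst hs; rfl
      rw [e0, e1, e2] at h
      exact h.symm
    have hrow : ∀ i, rT A i = rowR B i := by
      intro i
      rw [rT, offT, rowR]
      refine Finset.sum_bij' (fun (t : Fin 1 → Fin n) (_ : t ∈ _) => t 0)
        (fun j (_ : j ∈ univ.erase i) => fun _ : Fin 1 => j) ?_ ?_ ?_ ?_ ?_
      · intro t ht
        simp only [mem_filter, mem_univ, true_and] at ht
        refine Finset.mem_erase.mpr ⟨fun hc => ht ?_, mem_univ _⟩
        funext s
        have hs : s = 0 := Subsingleton.elim _ _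
        subst hs; exact hc
      · intro j hjmem
        simp only [mem_filter, mem_univ, true_and]
        intro hc
        exact (Finset.mem_erase.mp hjmem).1 (congrFun hc 0)
      · intro t _
        funext s
        have hs : s = 0 := Subsingleton.elim _ _
        subst hs; rfl
      · intro j _; rfl
      · intro t _
        have : (fun _ : Fin 1 => t 0) = t := by
          funext s
          have hs : s = 0 := Subsingleton.elim _ _
          subst hs; rfl
        show |A i t| = |B i (t 0)|
        rw [hB]
        congr 1
        exact congrArg (A i) this.symm
    have hconv : ∑ t : Fin (1+1) → Fin n, A (t 0) (Fin.tail t) * ∏ s, x (t s)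
        = ∑ i, ∑ j, B i j * (x i * x j) := by
      rw [← Fintype.sum_prod_type (f := fun p : Fin n × Fin n => B p.1 p.2 * (x p.1 * x p.2))]
      refine Fintype.sum_equiv (piFinTwoEquiv (fun _ => Fin n)) _ _ fun t => ?_
      have e2 : Fin.tail t = (fun _ : Fin 1 => t 1) := by
        funext s
        have hs : s = 0 := Subsingleton.elim _ _
        subst hs; rfl
      rw [e2, Fin.prod_univ_two]
      rfl
    rw [hconv]
    refine matPD B hBsym (fun i => hdiag i) (fun i j hij => ?_) x hx
    have h := hdsdd1 i j hij
    rw [habs i, habs j, hrow i, hrow j] at h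
    exact h
  · -- the general case : k + 1 ≥ 3
    have hdom : ∀ i, rT A i ≤ diagT A i := by
      intro i
      rw [← habs i]; exact hdsdd2 (by omega) i
    rw [sum_split (fun t => A (t 0) (Fin.tail t) * ∏ s, x (t s))]
    have hdiagsum : ∀ i : Fin n,
        A ((fun _ : Fin (k+1) => i) 0) (Fin.tail (fun _ => i)) * ∏ _s : Fin (k+1), x i
          = diagT A i * x i ^ (k+1) := by
      intro i
      congr 1
      rw [Finset.prod_const, Finset.card_univ, Fintype.card_fin]
    by_cases hsupp : ∃ p, ∀ j, j ≠ p → x j = 0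
    · -- x is supported on a single index
      obtain ⟨p, hp⟩ := hsupp
      have hxp : x p ≠ 0 := by
        intro h0
        apply hx
        funext j
        by_cases hj : j = p
        · rw [hj]; exact h0
        · exact hp j hj
      have hoff0 : ∑ t ∈ ncS n k, A (t 0) (Fin.tail t) * ∏ s, x (t s) = 0 := by
        refine Finset.sum_eq_zero fun t ht => ?_
        simp only [ncS, mem_filter, mem_univ, true_and] at ht
        push_neg at ht
        obtain ⟨s0, hs0⟩ := ht
        have hex : ∃ s, t s ≠ p := by
          by_cases h : t 0 = p
          · exact ⟨s0, fun hc => hs0 (by rw [hc, h])⟩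
          · exact ⟨0, h⟩
        obtain ⟨s, hs⟩ := hex
        rw [Finset.prod_eq_zero (mem_univ s) (hp _ hs), mul_zero]
      rw [hoff0, add_zero]
      have hre : ∑ i, A ((fun _ : Fin (k+1) => i) 0) (Fin.tail (fun _ => i)) *
          ∏ _s : Fin (k+1), x i = ∑ i, diagT A i * x i ^ (k+1) :=
        Finset.sum_congr rfl fun i _ => hdiagsum i
      rw [hre, Finset.sum_eq_single_of_mem p (mem_univ p)
        (fun i _ hip => by rw [hp i hip, zero_pow k.succ_ne_zero, mul_zero])]
      exact mul_pos (hdiag p) (hev.pow_pos hxp)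
    · -- at least two indices in the support
      push_neg at hsupp
      obtain ⟨q2, hq2ne, hq2⟩ := hsupp q
      have hyq2 : 0 < y q2 := abs_pos.mpr hq2
      have hoffb : -(∑ i, rT A i * y i ^ (k+1)) ≤
          ∑ t ∈ ncS n k, A (t 0) (Fin.tail t) * ∏ s, x (t s) := by
        have sub1 : ∀ t ∈ ncS n k,
            -(|A (t 0) (Fin.tail t)| * ∏ s, y (t s)) ≤
              A (t 0) (Fin.tail t) * ∏ s, x (t s) := by
          intro t _
          have habs2 : |A (t 0) (Fin.tail t) * ∏ s, x (t s)|
              = |A (t 0) (Fin.tail t)| * ∏ s, y (t s) := by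
            rw [abs_mul, Finset.abs_prod]
          rw [← habs2]
          exact neg_abs_le _
        have h2 := Finset.sum_le_sum sub1
        rw [Finset.sum_neg_distrib] at h2
        refine le_trans (neg_le_neg ?_) h2
        have stepc : ∀ s : Fin (k+1),
            ∑ t ∈ ncS n k, |A (t 0) (Fin.tail t)| * y (t s) ^ (k+1)
              = ∑ t ∈ ncS n k, |A (t 0) (Fin.tail t)| * y (t 0) ^ (k+1) := by
          intro s
          rw [sum_reindex (Equiv.swap 0 s)
            (fun t => |A (t 0) (Fin.tail t)| * y (t 0) ^ (k+1))]
          refine Finset.sum_congr rfl fun t _ => ?_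
          show |A (t 0) (Fin.tail t)| * y (t s) ^ (k+1)
            = |A ((t ∘ ⇑(Equiv.swap 0 s)) 0) (Fin.tail (t ∘ ⇑(Equiv.swap 0 s)))| *
              y ((t ∘ ⇑(Equiv.swap 0 s)) 0) ^ (k+1)
          have h0 : (t ∘ ⇑(Equiv.swap 0 s)) 0 = t s := by
            show t ((Equiv.swap 0 s) 0) = t s
            rw [Equiv.swap_apply_left]
          rw [hsym (Equiv.swap 0 s) t, h0]
        calc ∑ t ∈ ncS n k, |A (t 0) (Fin.tail t)| * ∏ s, y (t s)
            ≤ ∑ t ∈ ncS n k, |A (t 0) (Fin.tail t)| * ((∑ s, y (t s) ^ (k+1)) / ((k+1 : ℕ) : ℝ)) := by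
              refine Finset.sum_le_sum fun t _ => ?_
              refine mul_le_mul_of_nonneg_left ?_ (abs_nonneg _)
              exact amgm k.succ_pos (fun s => y (t s)) (fun s => abs_nonneg _)
          _ = ∑ t ∈ ncS n k, ∑ s, |A (t 0) (Fin.tail t)| * y (t s) ^ (k+1) / ((k+1 : ℕ) : ℝ) := by
              refine Finset.sum_congr rfl fun t _ => ?_
              rw [mul_div_assoc', Finset.mul_sum, Finset.sum_div]
          _ = ∑ s : Fin (k+1), ∑ t ∈ ncS n k,
              |A (t 0) (Fin.tail t)| * y (t s) ^ (k+1) / ((k+1 : ℕ) : ℝ) := Finset.sum_comm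
          _ = ∑ _s : Fin (k+1),
              (∑ t ∈ ncS n k, |A (t 0) (Fin.tail t)| * y (t 0) ^ (k+1)) / ((k+1 : ℕ) : ℝ) := by
              refine Finset.sum_congr rfl fun s _ => ?_
              rw [← Finset.sum_div, stepc s]
          _ = ∑ t ∈ ncS n k, |A (t 0) (Fin.tail t)| * y (t 0) ^ (k+1) := by
              rw [Finset.sum_const, Finset.card_univ, Fintype.card_fin, nsmul_eq_mul,
                mul_comm, div_mul_cancel₀]
              exact Nat.cast_ne_zero.mpr k.succ_ne_zero
          _ = ∑ i, rT A i * y i ^ (k+1) := by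
              rw [← Finset.sum_fiberwise (ncS n k) (fun t => t 0)
                (fun t => |A (t 0) (Fin.tail t)| * y (t 0) ^ (k+1))]
              refine Finset.sum_congr rfl fun i _ => ?_
              rw [Finset.sum_congr rfl (fun t ht =>
                  by rw [(Finset.mem_filter.mp ht).2] :
                ∀ t ∈ (ncS n k).filter (fun t => t 0 = i),
                  |A (t 0) (Fin.tail t)| * y (t 0) ^ (k+1)
                    = |A (t 0) (Fin.tail t)| * y i ^ (k+1)),
                ← Finset.sum_mul, sum_fiber A i]
      have hdsum : ∑ i, A ((fun _ : Fin (k+1) => i) 0) (Fin.tail (fun _ => i)) *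
          ∏ _s : Fin (k+1), x i = ∑ i, diagT A i * y i ^ (k+1) := by
        refine Finset.sum_congr rfl fun i _ => ?_
        rw [hdiagsum i, ← hev.pow_abs (x i)]
      rw [hdsum]
      have hfinal : 0 < ∑ i, diagT A i * y i ^ (k+1) - ∑ i, rT A i * y i ^ (k+1) := by
        rw [← Finset.sum_sub_distrib]
        have hterm : ∀ i, diagT A i * y i ^ (k+1) - rT A i * y i ^ (k+1)
            = (diagT A i - rT A i) * y i ^ (k+1) := fun i => by ring
        rw [Finset.sum_congr rfl fun i _ => hterm i]
        have hone : rT A q < diagT A q ∨ rT A q2 < diagT A q2 := by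
          by_contra hcon
          push_neg at hcon
          have e1 : rT A q = diagT A q := le_antisymm (hdom q) hcon.1
          have e2 : rT A q2 = diagT A q2 := le_antisymm (hdom q2) hcon.2
          have := hdsdd1 q2 q hq2ne
          rw [habs q2, habs q, e1, e2] at this
          exact lt_irrefl _ (by rw [mul_comm] at this; exact this)
        refine Finset.sum_pos' (fun i _ => mul_nonneg (sub_nonneg.mpr (hdom i))
          (pow_nonneg (abs_nonneg _) _)) ?_
        rcases hone with h1 | h1
        · exact ⟨q, mem_univ q, mul_pos (sub_pos.mpr h1) (pow_pos hyq _)⟩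
        · exact ⟨q2, mem_univ q2, mul_pos (sub_pos.mpr h1) (pow_pos hyq2 _)⟩
      linarith [hoffb, hfinal]
end

section
/- Let A be a real m-order n-dimensional symmetric tensor with m even, a_{i...i} > 0 for all i, and suppose A is quasi-doubly strictly diagonally dominant: |a_{i...i}|(|a_{j...j}| − r_j^i(A)) > r_i(A)|a_{j i...i}| for all i ≠ j. Then A is positive definite. -/
open Finset

namespace QDSDD4

open Finset

variable {n k : ℕ}

noncomputable def Fp (A : Fin n → (Fin k → Fin n) → ℝ) (x : Fin n → ℝ) : ℝ :=
  ∑ t : Fin (k+1) → Fin n, A (t 0) (Fin.tail t) * ∏ s, x (t s)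

noncomputable def rowP (A : Fin n → (Fin k → Fin n) → ℝ) (x : Fin n → ℝ) (i : Fin n) : ℝ :=
  ∑ u : Fin k → Fin n, A i u * ∏ s, x (u s)

noncomputable def gp (k : ℕ) (x : Fin n → ℝ) : ℝ := ∑ l, x l ^ (k+1)

lemma Fp_smul (A : Fin n → (Fin k → Fin n) → ℝ) (c : ℝ) (x : Fin n → ℝ) :
    Fp A (fun l => c * x l) = c ^ (k+1) * Fp A x := by
  unfold Fp
  rw [Finset.mul_sum]
  refine Finset.sum_congr rfl fun t _ => ?_
  rw [Finset.prod_mul_distrib, Finset.prod_const, Finset.card_univ, Fintype.card_fin]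
  ring

lemma Fp_cont (A : Fin n → (Fin k → Fin n) → ℝ) : Continuous (Fp A) := by
  unfold Fp
  exact continuous_finset_sum _ fun t _ =>
    continuous_const.mul (continuous_finset_prod _ fun s _ => continuous_apply _)

lemma gp_cont : Continuous (gp (n := n) k) := by
  unfold gp
  exact continuous_finset_sum _ fun l _ => (continuous_apply _).pow _

lemma erase_zero_eq_map (m : ℕ) :
    (univ : Finset (Fin (m+1))).erase 0 = univ.map (Fin.succEmb m) := by
  ext j
  simp only [Finset.mem_erase, Finset.mem_univ, and_true, Finset.mem_map, true_and]
  constructor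
  · intro h
    obtain ⟨y, hy⟩ := Fin.exists_succ_eq_of_ne_zero h
    exact ⟨y, hy⟩
  · rintro ⟨a, rfl⟩
    exact Fin.succ_ne_zero a

lemma prod_erase_zero {m : ℕ} (f : Fin (m+1) → ℝ) :
    ∏ j ∈ (univ : Finset (Fin (m+1))).erase 0, f j = ∏ w : Fin m, f w.succ := by
  rw [erase_zero_eq_map, Finset.prod_map]
  rfl

lemma slot_sum (A : Fin n → (Fin k → Fin n) → ℝ) (hsym : SymT A) (x : Fin n → ℝ)
    (i : Fin n) (s : Fin (k+1)) :
    (∑ t : Fin (k+1) → Fin n, A (t 0) (Fin.tail t) *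
      (if t s = i then ∏ j ∈ univ.erase s, x (t j) else 0)) = rowP A x i := by
  classical
  set σ := Equiv.swap (0 : Fin (k+1)) s with hσ
  have hbij : Function.Bijective (fun t : Fin (k+1) → Fin n => t ∘ ⇑σ) := by
    constructor
    · intro a b h
      funext j
      have h2 := congrFun h (σ.symm j)
      simpa using h2
    · intro t
      refine ⟨t ∘ ⇑σ.symm, ?_⟩
      funext j; simp
  have step : ∀ t : Fin (k+1) → Fin n,
      A (t 0) (Fin.tail t) * (if t 0 = i then ∏ j ∈ univ.erase (0:Fin (k+1)), x (t j) else 0)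
      = A ((t ∘ ⇑σ) 0) (Fin.tail (t ∘ ⇑σ)) *
        (if (t ∘ ⇑σ) s = i then ∏ j ∈ univ.erase s, x ((t ∘ ⇑σ) j) else 0) := by
    intro t
    rw [hsym σ t]
    congr 1
    have h1 : (t ∘ ⇑σ) s = t 0 := by
      simp [hσ, Equiv.swap_apply_right]
    rw [h1]
    by_cases h2 : t 0 = i
    · rw [if_pos h2, if_pos h2]
      calc (∏ j ∈ univ.erase (0:Fin (k+1)), x (t j))
          = ∏ j ∈ (univ.erase s).image ⇑σ, x (t j) := by
            rw [Finset.image_erase σ.injective, Finset.image_univ_equiv]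
            have : σ s = 0 := Equiv.swap_apply_right 0 s
            rw [this]
        _ = ∏ j ∈ univ.erase s, x ((t ∘ ⇑σ) j) :=
            Finset.prod_image (fun a _ b _ h => σ.injective h)
    · rw [if_neg h2, if_neg h2]
  have h1 : (∑ t : Fin (k+1) → Fin n,
      A (t 0) (Fin.tail t) * (if t 0 = i then ∏ j ∈ univ.erase (0:Fin (k+1)), x (t j) else 0))
      = ∑ t : Fin (k+1) → Fin n, A (t 0) (Fin.tail t) *
        (if t s = i then ∏ j ∈ univ.erase s, x (t j) else 0) :=
    Fintype.sum_bijective _ hbij _ _ step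
  rw [← h1]
  -- reindex by cons
  have hbij2 : Function.Bijective
      (fun p : Fin n × (Fin k → Fin n) => (Fin.cons p.1 p.2 : Fin (k+1) → Fin n)) := by
    constructor
    · intro p q h
      have h0 := congrFun h 0
      have ht : p.2 = q.2 := funext fun w => by
        have := congrFun h w.succ
        simpa using this
      exact Prod.ext (by simpa using h0) ht
    · intro t
      exact ⟨(t 0, Fin.tail t), Fin.cons_self_tail t⟩
  have step2 : ∀ p : Fin n × (Fin k → Fin n),
      (if p.1 = i then A p.1 p.2 * ∏ w, x (p.2 w) else 0)
      = A ((Fin.cons p.1 p.2 : Fin (k+1) → Fin n) 0)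
          (Fin.tail (Fin.cons p.1 p.2 : Fin (k+1) → Fin n)) *
        (if (Fin.cons p.1 p.2 : Fin (k+1) → Fin n) 0 = i
          then ∏ j ∈ univ.erase (0:Fin (k+1)), x ((Fin.cons p.1 p.2 : Fin (k+1) → Fin n) j)
          else 0) := by
    rintro ⟨a, u⟩
    simp only [Fin.cons_zero, Fin.tail_cons]
    by_cases h : a = i
    · rw [if_pos h, if_pos h]
      congr 1
      rw [prod_erase_zero]
      exact (Finset.prod_congr rfl fun w _ => by rw [Fin.cons_succ]).symm
    · rw [if_neg h, if_neg h, mul_zero]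
  have h2 : (∑ p : Fin n × (Fin k → Fin n), if p.1 = i then A p.1 p.2 * ∏ w, x (p.2 w) else 0)
      = ∑ t : Fin (k+1) → Fin n,
        A (t 0) (Fin.tail t) * (if t 0 = i then ∏ j ∈ univ.erase (0:Fin (k+1)), x (t j) else 0) :=
    Fintype.sum_bijective _ hbij2 _ _ step2
  rw [← h2, Fintype.sum_prod_type]
  have h3 : ∀ a : Fin n,
      (∑ u : Fin k → Fin n, if a = i then A a u * ∏ w, x (u w) else 0)
      = if a = i then rowP A x a else 0 := by
    intro a
    by_cases h : a = i <;> simp [h, rowP]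
  rw [Finset.sum_congr rfl fun a _ => h3 a]
  rw [Finset.sum_ite_eq' univ i (fun a => rowP A x a)]
  simp

lemma deriv_key (A : Fin n → (Fin k → Fin n) → ℝ) (hsym : SymT A) (x : Fin n → ℝ) (i : Fin n) :
    (∑ t : Fin (k+1) → Fin n, A (t 0) (Fin.tail t) *
      ∑ s : Fin (k+1), (if t s = i then ∏ j ∈ univ.erase s, x (t j) else 0))
      = ((k:ℝ)+1) * rowP A x i := by
  calc (∑ t : Fin (k+1) → Fin n, A (t 0) (Fin.tail t) *
      ∑ s : Fin (k+1), (if t s = i then ∏ j ∈ univ.erase s, x (t j) else 0))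
      = ∑ t : Fin (k+1) → Fin n, ∑ s : Fin (k+1), A (t 0) (Fin.tail t) *
        (if t s = i then ∏ j ∈ univ.erase s, x (t j) else 0) :=
        Finset.sum_congr rfl fun t _ => Finset.mul_sum _ _ _
    _ = ∑ s : Fin (k+1), ∑ t : Fin (k+1) → Fin n, A (t 0) (Fin.tail t) *
        (if t s = i then ∏ j ∈ univ.erase s, x (t j) else 0) := Finset.sum_comm
    _ = ∑ _s : Fin (k+1), rowP A x i :=
        Finset.sum_congr rfl fun s _ => slot_sum A hsym x i s
    _ = ((k:ℝ)+1) * rowP A x i := by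
        rw [Finset.sum_const, Finset.card_univ, Fintype.card_fin, nsmul_eq_mul]
        push_cast; ring

lemma hasDerivAt_Fp (A : Fin n → (Fin k → Fin n) → ℝ) (hsym : SymT A)
    (x : Fin n → ℝ) (i : Fin n) :
    HasDerivAt (fun ε => Fp A (Function.update x i ε)) (((k:ℝ)+1) * rowP A x i) (x i) := by
  classical
  have h1 : ∀ t : Fin (k+1) → Fin n,
      HasDerivAt (fun ε => ∏ s, Function.update x i ε (t s))
        (∑ s : Fin (k+1), (∏ j ∈ univ.erase s, Function.update x i (x i) (t j)) •
          (if t s = i then (1:ℝ) else 0)) (x i) := by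
    intro t
    refine HasDerivAt.fun_finsetProd fun s _ => ?_
    by_cases h : t s = i
    · have he : (fun ε => Function.update x i ε (t s)) = fun ε => ε := by
        funext ε; rw [h, Function.update_self]
      rw [he, if_pos h]
      exact hasDerivAt_id (x i)
    · have he : (fun ε => Function.update x i ε (t s)) = fun _ => x (t s) := by
        funext ε; rw [Function.update_of_ne h]
      rw [he, if_neg h]
      exact hasDerivAt_const _ _
  have h2 : HasDerivAt (fun ε => ∑ t : Fin (k+1) → Fin n,
        A (t 0) (Fin.tail t) * ∏ s, Function.update x i ε (t s))
      (∑ t : Fin (k+1) → Fin n, A (t 0) (Fin.tail t) *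
        (∑ s : Fin (k+1), (∏ j ∈ univ.erase s, Function.update x i (x i) (t j)) •
          (if t s = i then (1:ℝ) else 0))) (x i) :=
    HasDerivAt.fun_sum fun t _ => (h1 t).const_mul _
  have h4 : (∑ t : Fin (k+1) → Fin n, A (t 0) (Fin.tail t) *
        (∑ s : Fin (k+1), (∏ j ∈ univ.erase s, Function.update x i (x i) (t j)) •
          (if t s = i then (1:ℝ) else 0)))
      = ((k:ℝ)+1) * rowP A x i := by
    have hupd : Function.update x i (x i) = x := Function.update_eq_self i x
    rw [hupd]
    have hq : ∀ (t : Fin (k+1) → Fin n) (s : Fin (k+1)),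
        (∏ j ∈ univ.erase s, x (t j)) • (if t s = i then (1:ℝ) else 0)
        = (if t s = i then ∏ j ∈ univ.erase s, x (t j) else 0) := by
      intro t s; by_cases h : t s = i <;> simp [h]
    calc _ = (∑ t : Fin (k+1) → Fin n, A (t 0) (Fin.tail t) *
          ∑ s : Fin (k+1), (if t s = i then ∏ j ∈ univ.erase s, x (t j) else 0)) := by
          refine Finset.sum_congr rfl fun t _ => ?_
          rw [Finset.sum_congr rfl fun s _ => hq t s]
      _ = ((k:ℝ)+1) * rowP A x i := deriv_key A hsym x i
  rw [← h4]
  exact h2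

lemma hasDerivAt_gp (x : Fin n → ℝ) (i : Fin n) :
    HasDerivAt (fun ε => gp k (Function.update x i ε)) (((k:ℝ)+1) * x i ^ k) (x i) := by
  classical
  have h : ∀ l : Fin n, HasDerivAt (fun ε => Function.update x i ε l ^ (k+1))
      (if l = i then ((k:ℝ)+1) * x i ^ k else 0) (x i) := by
    intro l
    by_cases hl : l = i
    · subst hl
      have he : (fun ε => Function.update x l ε l ^ (k+1)) = fun ε => ε ^ (k+1) := by
        funext ε; rw [Function.update_self]
      rw [he, if_pos rfl]
      have := hasDerivAt_pow (k+1) (x l)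
      simpa using this
    · have he : (fun ε => Function.update x i ε l ^ (k+1)) = fun _ => x l ^ (k+1) := by
        funext ε; rw [Function.update_of_ne hl]
      rw [he, if_neg hl]
      exact hasDerivAt_const _ _
  have hsum := HasDerivAt.fun_sum (fun l (_ : l ∈ univ) => h l)
  have h2 : (∑ l : Fin n, if l = i then ((k:ℝ)+1) * x i ^ k else 0)
      = ((k:ℝ)+1) * x i ^ k := by
    rw [Finset.sum_ite_eq' univ i (fun _ => ((k:ℝ)+1) * x i ^ k)]
    simp
  rw [← h2]
  exact hsum

lemma rowP_split (A : Fin n → (Fin k → Fin n) → ℝ) (x : Fin n → ℝ) (i : Fin n) :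
    rowP A x i = A i (fun _ => i) * x i ^ k + ∑ u ∈ offT k i, A i u * ∏ s, x (u s) := by
  classical
  unfold rowP offT
  rw [← Finset.sum_filter_add_sum_filter_not univ (fun u : Fin k → Fin n => u = fun _ => i)]
  congr 1
  rw [Finset.filter_eq']
  simp [Finset.prod_const]

end QDSDD4

/-- An even-order symmetric Q-DSDD tensor with positive diagonal is positive definite. -/
theorem stmt4 {n k : ℕ} (A : Fin n → (Fin k → Fin n) → ℝ)
    (hev : Even (k + 1)) (hsym : SymT A)
    (hdiag : ∀ i, 0 < diagT A i)
    (hqdsdd : ∀ i j, i ≠ j → rT A i * |A j (fun _ => i)| <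
      |diagT A i| * (|diagT A j| - rT2 A j i))
    (x : Fin n → ℝ) (hx : x ≠ 0) :
    0 < ∑ t : Fin (k+1) → Fin n, A (t 0) (Fin.tail t) * ∏ s, x (t s) := by
  classical
  have goal_eq : (∑ t : Fin (k+1) → Fin n, A (t 0) (Fin.tail t) * ∏ s, x (t s))
      = QDSDD4.Fp A x := rfl
  rw [goal_eq]
  rcases Nat.eq_zero_or_pos n with hn | hn
  · exfalso
    apply hx
    funext l
    exact absurd l.isLt (by omega)
  have i0 : Fin n := ⟨0, hn⟩
  have hm0 : k + 1 ≠ 0 := Nat.succ_ne_zero k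
  have hk0 : k ≠ 0 := by
    rintro rfl
    norm_num at hev
  have hpow : ∀ a : ℝ, 0 ≤ a ^ (k+1) := fun a => hev.pow_nonneg a
  have hgpnn : ∀ z : Fin n → ℝ, 0 ≤ QDSDD4.gp k z :=
    fun z => Finset.sum_nonneg fun l _ => hpow _
  have hgp_zero : ∀ z : Fin n → ℝ, QDSDD4.gp k z = 0 → z = 0 := by
    intro z hz
    funext l
    have h1 : z l ^ (k+1) = 0 :=
      (Finset.sum_eq_zero_iff_of_nonneg (fun l _ => hpow (z l))).mp hz l (Finset.mem_univ l)
    exact (pow_eq_zero_iff hm0).mp h1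
  set S : Set (Fin n → ℝ) := {z | QDSDD4.gp k z = 1} with hS
  have hclosed : IsClosed S := isClosed_eq QDSDD4.gp_cont continuous_const
  have hsub : S ⊆ Set.pi Set.univ fun _ => Set.Icc (-1:ℝ) 1 := by
    intro z hz l _
    have hz1 : QDSDD4.gp k z = 1 := hz
    have h1 : z l ^ (k+1) ≤ 1 := by
      have h2 := Finset.single_le_sum (f := fun l => z l ^ (k+1))
        (fun l _ => hpow _) (Finset.mem_univ l)
      rw [show (∑ l, z l ^ (k+1)) = QDSDD4.gp k z from rfl, hz1] at h2
      exact h2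
    have h3 : |z l| ^ (k+1) ≤ 1 := by
      rw [← abs_pow, abs_of_nonneg (hpow _)]
      exact h1
    exact abs_le.mp ((pow_le_one_iff_of_nonneg (abs_nonneg _) hm0).mp h3)
  have hcomp : IsCompact S :=
    (isCompact_univ_pi fun _ => isCompact_Icc).of_isClosed_subset hclosed hsub
  have hne : S.Nonempty := by
    refine ⟨Pi.single i0 1, ?_⟩
    show QDSDD4.gp k (Pi.single i0 1) = 1
    unfold QDSDD4.gp
    rw [Finset.sum_eq_single i0]
    · simp
    · intro l _ hl
      rw [Pi.single_eq_of_ne hl, zero_pow hm0]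
    · intro h; exact absurd (Finset.mem_univ i0) h
  obtain ⟨y, hyS, hmin⟩ := hcomp.exists_isMinOn hne (QDSDD4.Fp_cont A).continuousOn
  have hy1 : QDSDD4.gp k y = 1 := hyS
  set lam := QDSDD4.Fp A y with hlam_def
  have hglob : ∀ z, lam * QDSDD4.gp k z ≤ QDSDD4.Fp A z := by
    intro z
    rcases eq_or_ne (QDSDD4.gp k z) 0 with hz | hz
    · rw [hz, mul_zero, hgp_zero z hz]
      have h0 : QDSDD4.Fp A (0 : Fin n → ℝ) = 0 := by
        unfold QDSDD4.Fp
        refine Finset.sum_eq_zero fun t _ => ?_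
        have hp : (∏ s : Fin (k+1), (0 : Fin n → ℝ) (t s)) = 0 :=
          Finset.prod_eq_zero (Finset.mem_univ (0 : Fin (k+1))) rfl
        rw [hp, mul_zero]
      rw [h0]
    · have hc : 0 < QDSDD4.gp k z := lt_of_le_of_ne (hgpnn z) (Ne.symm hz)
      set d : ℝ := (QDSDD4.gp k z) ^ ((((k+1 : ℕ)) : ℝ)⁻¹) with hd_def
      have hd : 0 < d := Real.rpow_pos_of_pos hc _
      have hdm : d ^ (k+1) = QDSDD4.gp k z := Real.rpow_inv_natCast_pow hc.le hm0
      set w : Fin n → ℝ := fun l => z l / d with hw_def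
      have hwS : w ∈ S := by
        rw [hS]
        simp only [Set.mem_setOf_eq]
        show (∑ l, w l ^ (k+1)) = 1
        have hterm : ∀ l : Fin n, w l ^ (k+1) = z l ^ (k+1) / d ^ (k+1) := by
          intro l
          simp only [hw_def]
          rw [div_pow]
        rw [Finset.sum_congr rfl fun l _ => hterm l, ← Finset.sum_div, hdm]
        exact div_self (ne_of_gt hc)
      have hzw : z = fun l => d * w l := by
        funext l
        simp only [hw_def]
        field_simp
      have h1 : QDSDD4.Fp A z = d ^ (k+1) * QDSDD4.Fp A w := by
        have h := QDSDD4.Fp_smul A d w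
        rw [← hzw] at h
        exact h
      have h2 : lam ≤ QDSDD4.Fp A w := isMinOn_iff.mp hmin w hwS
      have h3 : d ^ (k+1) * lam ≤ d ^ (k+1) * QDSDD4.Fp A w :=
        mul_le_mul_of_nonneg_left h2 (le_of_lt (pow_pos hd _))
      calc lam * QDSDD4.gp k z = d ^ (k+1) * lam := by rw [← hdm]; ring
        _ ≤ d ^ (k+1) * QDSDD4.Fp A w := h3
        _ = QDSDD4.Fp A z := h1.symm
  have hgx : 0 < QDSDD4.gp k x := by
    obtain ⟨l, hl⟩ := Function.ne_iff.mp hx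
    have h1 : 0 < x l ^ (k+1) := hev.pow_pos hl
    calc (0:ℝ) < x l ^ (k+1) := h1
      _ ≤ QDSDD4.gp k x := Finset.single_le_sum (fun l _ => hpow _) (Finset.mem_univ l)
  suffices hlam : 0 < lam by
    calc (0:ℝ) < lam * QDSDD4.gp k x := mul_pos hlam hgx
      _ ≤ QDSDD4.Fp A x := hglob x
  by_contra hcon
  push_neg at hcon
  have hEig : ∀ i, QDSDD4.rowP A y i = lam * y i ^ k := by
    intro i
    have hloc : IsLocalMin
        (fun ε => QDSDD4.Fp A (Function.update y i ε)
          - lam * QDSDD4.gp k (Function.update y i ε)) (y i) := by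
      refine Filter.Eventually.of_forall fun ε => ?_
      show QDSDD4.Fp A (Function.update y i (y i))
          - lam * QDSDD4.gp k (Function.update y i (y i)) ≤ _
      rw [Function.update_eq_self, hy1]
      have := hglob (Function.update y i ε)
      simp only []
      linarith
    have hder : HasDerivAt
        (fun ε => QDSDD4.Fp A (Function.update y i ε)
          - lam * QDSDD4.gp k (Function.update y i ε))
        (((k:ℝ)+1) * QDSDD4.rowP A y i - lam * (((k:ℝ)+1) * y i ^ k)) (y i) :=
      (QDSDD4.hasDerivAt_Fp A hsym y i).sub ((QDSDD4.hasDerivAt_gp y i).const_mul lam)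
    have h0 := hloc.deriv_eq_zero
    rw [hder.deriv] at h0
    have hk1 : ((k:ℝ)+1) ≠ 0 := by positivity
    have h0' : ((k:ℝ)+1) * (QDSDD4.rowP A y i - lam * y i ^ k) = ((k:ℝ)+1) * 0 := by
      rw [mul_zero]
      linear_combination h0
    have := mul_left_cancel₀ hk1 h0'
    linarith [this]
  obtain ⟨i, -, hmax'⟩ := Finset.exists_max_image (univ : Finset (Fin n))
    (fun l => |y l|) ⟨i0, Finset.mem_univ i0⟩
  have hmax : ∀ l, |y l| ≤ |y i| := fun l => hmax' l (Finset.mem_univ l)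
  have hyi : y i ≠ 0 := by
    intro h0
    have hy0 : y = 0 := by
      funext l
      have h1 := hmax l
      rw [h0, abs_zero] at h1
      exact abs_eq_zero.mp (le_antisymm h1 (abs_nonneg _))
    rw [hy0] at hy1
    have h2 : QDSDD4.gp k (0 : Fin n → ℝ) = 0 := by
      unfold QDSDD4.gp
      refine Finset.sum_eq_zero fun l _ => ?_
      rw [show (0 : Fin n → ℝ) l = 0 from rfl, zero_pow hm0]
    rw [h2] at hy1
    norm_num at hy1
  have heigen : ∀ i' : Fin n, A i' (fun _ => i') * y i' ^ k
      + (∑ u ∈ offT k i', A i' u * ∏ s, y (u s)) = lam * y i' ^ k := by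
    intro i'
    rw [← QDSDD4.rowP_split]
    exact hEig i'
  by_cases hall : ∀ l, l ≠ i → y l = 0
  · have hSi : (∑ u ∈ offT k i, A i u * ∏ s, y (u s)) = 0 := by
      refine Finset.sum_eq_zero fun u hu => ?_
      simp only [offT, Finset.mem_filter] at hu
      obtain ⟨s, hs⟩ := Function.ne_iff.mp hu.2
      rw [Finset.prod_eq_zero (Finset.mem_univ s) (hall (u s) hs), mul_zero]
    have h1 := heigen i
    rw [hSi, add_zero] at h1
    have hpk : y i ^ k ≠ 0 := pow_ne_zero _ hyi
    have h2 : A i (fun _ => i) = lam := mul_right_cancel₀ hpk h1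
    have h3 : 0 < A i (fun _ => i) := hdiag i
    linarith
  · push_neg at hall
    obtain ⟨j, hji, hyj⟩ := hall
    have hprod_le : ∀ u : Fin k → Fin n, (∏ s, |y (u s)|) ≤ |y i| ^ k := by
      intro u
      calc (∏ s, |y (u s)|) ≤ ∏ _s : Fin k, |y i| :=
            Finset.prod_le_prod (fun s _ => abs_nonneg _) (fun s _ => hmax (u s))
        _ = |y i| ^ k := by rw [Finset.prod_const, Finset.card_univ, Fintype.card_fin]
    have hUk : 0 < |y i| ^ k := pow_pos (abs_pos.mpr hyi) k
    have hVk : 0 < |y j| ^ k := pow_pos (abs_pos.mpr hyj) k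
    have hdi : 0 < A i (fun _ => i) := hdiag i
    have hdj : 0 < A j (fun _ => j) := hdiag j
    have hβ : 0 < A j (fun _ => j) - lam := by linarith
    have hα : 0 < A i (fun _ => i) - lam := by linarith
    have hII : (A j (fun _ => j) - lam) * |y j| ^ k ≤ rT A j * |y i| ^ k := by
      have h1 : (A j (fun _ => j) - lam) * y j ^ k
          = -(∑ u ∈ offT k j, A j u * ∏ s, y (u s)) := by
        linear_combination heigen j
      have h2 : |(A j (fun _ => j) - lam) * y j ^ k|
          ≤ ∑ u ∈ offT k j, |A j u| * |y i| ^ k := by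
        rw [h1, abs_neg]
        refine le_trans (Finset.abs_sum_le_sum_abs _ _) (Finset.sum_le_sum fun u _ => ?_)
        rw [abs_mul, abs_prod]
        exact mul_le_mul_of_nonneg_left (hprod_le u) (abs_nonneg _)
      have h3 : |(A j (fun _ => j) - lam) * y j ^ k|
          = (A j (fun _ => j) - lam) * |y j| ^ k := by
        rw [abs_mul, abs_pow, abs_of_pos hβ]
      rw [h3] at h2
      calc (A j (fun _ => j) - lam) * |y j| ^ k
          ≤ ∑ u ∈ offT k j, |A j u| * |y i| ^ k := h2
        _ = rT A j * |y i| ^ k := by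
            rw [show rT A j = ∑ u ∈ offT k j, |A j u| from rfl, Finset.sum_mul]
    have hconstne : (fun _ => j : Fin k → Fin n) ≠ (fun _ => i) := by
      intro h
      exact hji (congrFun h ⟨0, Nat.pos_of_ne_zero hk0⟩)
    have hset : offT k i = insert (fun _ => j : Fin k → Fin n) (offT2 k j i) := by
      ext u
      simp only [offT, offT2, Finset.mem_insert, Finset.mem_filter, Finset.mem_univ, true_and]
      constructor
      · intro h
        by_cases h2 : u = fun _ => j
        · exact Or.inl h2
        · exact Or.inr ⟨h2, h⟩
      · rintro (rfl | ⟨h1, h2⟩)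
        · exact hconstne
        · exact h2
    have hnotmem : (fun _ => j : Fin k → Fin n) ∉ offT2 k j i := by
      simp [offT2]
    have hI : (A i (fun _ => i) - lam) * |y i| ^ k
        ≤ |A i (fun _ => j)| * |y j| ^ k + rT2 A i j * |y i| ^ k := by
      have h1 : (A i (fun _ => i) - lam) * y i ^ k
          = -(∑ u ∈ offT k i, A i u * ∏ s, y (u s)) := by
        linear_combination heigen i
      have h3 : |(A i (fun _ => i) - lam) * y i ^ k|
          = (A i (fun _ => i) - lam) * |y i| ^ k := by
        rw [abs_mul, abs_pow, abs_of_pos hα]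
      have h2 : |(∑ u ∈ offT k i, A i u * ∏ s, y (u s))|
          ≤ |A i (fun _ => j)| * |y j| ^ k + rT2 A i j * |y i| ^ k := by
        rw [hset, Finset.sum_insert hnotmem]
        refine le_trans (abs_add_le _ _) (add_le_add ?_ ?_)
        · rw [abs_mul, abs_prod]
          apply le_of_eq
          congr 1
          calc (∏ s : Fin k, |y ((fun _ => j : Fin k → Fin n) s)|)
              = ∏ _s : Fin k, |y j| := rfl
            _ = |y j| ^ k := by rw [Finset.prod_const, Finset.card_univ, Fintype.card_fin]
        · refine le_trans (Finset.abs_sum_le_sum_abs _ _) ?_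
          rw [show rT2 A i j = ∑ u ∈ offT2 k j i, |A i u| from rfl, Finset.sum_mul]
          refine Finset.sum_le_sum fun u _ => ?_
          rw [abs_mul, abs_prod]
          exact mul_le_mul_of_nonneg_left (hprod_le u) (abs_nonneg _)
      rw [← h3, h1, abs_neg]
      exact h2
    have hq := hqdsdd j i hji
    rw [abs_of_pos (hdiag j), abs_of_pos (hdiag i)] at hq
    have hq' : rT A j * |A i (fun _ => j)|
        < A j (fun _ => j) * (A i (fun _ => i) - rT2 A i j) := hq
    have hrTnn : 0 ≤ rT A j := Finset.sum_nonneg fun _ _ => abs_nonneg _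
    have habsnn : 0 ≤ |A i (fun _ => j)| := abs_nonneg _
    have hpos2 : 0 < A i (fun _ => i) - rT2 A i j := by
      nlinarith
    have s1 : (A i (fun _ => i) - lam - rT2 A i j) * |y i| ^ k
        ≤ |A i (fun _ => j)| * |y j| ^ k := by
      nlinarith [hI]
    have s3 : ((A i (fun _ => i) - lam - rT2 A i j) * |y i| ^ k)
          * ((A j (fun _ => j) - lam) * |y j| ^ k)
        ≤ (|A i (fun _ => j)| * |y j| ^ k) * (rT A j * |y i| ^ k) :=
      mul_le_mul s1 hII (by positivity) (by positivity)
    have hUV : 0 < |y i| ^ k * |y j| ^ k := mul_pos hUk hVk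
    have c2 : (A i (fun _ => i) - lam - rT2 A i j) * (A j (fun _ => j) - lam)
        ≤ rT A j * |A i (fun _ => j)| := by
      refine le_of_mul_le_mul_right ?_ hUV
      nlinarith [s3]
    nlinarith [c2, hq', mul_nonneg (le_of_lt hpos2) (neg_nonneg.mpr hcon),
      mul_nonneg (neg_nonneg.mpr hcon) (le_of_lt hdj), mul_self_nonneg lam]
end

section
/- If A is a quasi-doubly strictly diagonally dominant tensor (|a_{i...i}|(|a_{j...j}| − r_j^i(A)) > r_i(A)|a_{j i...i}| for all i ≠ j) with n ≥ 2, then there exists an index i with |a_{i...i}| > r_i(A). -/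
open Finset

/-- A Q-DSDD tensor has a strictly diagonally dominant row. -/
theorem stmt5 {n k : ℕ} (hn : 2 ≤ n) (A : Fin n → (Fin k → Fin n) → ℝ)
    (hqdsdd : ∀ i j, i ≠ j → rT A i * |A j (fun _ => i)| <
      |diagT A i| * (|diagT A j| - rT2 A j i)) :
    ∃ i, rT A i < |diagT A i| := by
  by_contra hcon
  push_neg at hcon
  obtain ⟨i, j, hij⟩ : ∃ i j : Fin n, i ≠ j :=
    ⟨⟨0, by omega⟩, ⟨1, by omega⟩, by simp [Fin.ext_iff]⟩
  have key : |diagT A j| - rT2 A j i ≤ |A j (fun _ => i)| := by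
    by_cases hc : (fun _ : Fin k => i) = (fun _ => j)
    · have heq : rT2 A j i = rT A j := by
        unfold rT rT2 offT offT2
        congr 1
        ext t
        simp only [Finset.mem_filter, Finset.mem_univ, true_and, hc, and_self]
      have := hcon j
      have := abs_nonneg (A j (fun _ => i))
      linarith
    · have hmem : (fun _ : Fin k => i) ∈ offT k j := by
        simp [offT, hc]
      have hsplit : rT A j = rT2 A j i + |A j (fun _ => i)| := by
        have hset : (offT k j).erase (fun _ => i) = offT2 k i j := by
          ext t
          simp only [Finset.mem_erase, offT, offT2, Finset.mem_filter,
            Finset.mem_univ, true_and]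
        unfold rT rT2
        rw [← Finset.sum_erase_add _ _ hmem, hset]
      have := hcon j
      linarith
  have h1 := hqdsdd i j hij
  have h2 : |diagT A i| * (|diagT A j| - rT2 A j i) ≤ |diagT A i| * |A j (fun _ => i)| :=
    mul_le_mul_of_nonneg_left key (abs_nonneg _)
  have h3 : |diagT A i| * |A j (fun _ => i)| ≤ rT A i * |A j (fun _ => i)| :=
    mul_le_mul_of_nonneg_right (hcon i) (abs_nonneg _)
  linarith
end

section
/- If A is a double B̄-tensor (i.e., Ā is a double B-tensor), then every principal subtensor A[α], for any nonempty subset α of indices, is a double B̄-tensor. -/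
open Finset

section Aux

variable {n k : ℕ}

/-- restriction of a tensor to a principal subtensor -/
def resT (B : Fin n → (Fin k → Fin n) → ℝ) (α : Finset (Fin n)) :
    {x // x ∈ α} → (Fin k → {x // x ∈ α}) → ℝ :=
  fun i t => B i.val (fun s => (t s).val)

lemma valcomp_mem_offT {α : Finset (Fin n)} {i : {x // x ∈ α}}
    {t : Fin k → {x // x ∈ α}} (ht : t ∈ offT k i) :
    (fun s => (t s).val) ∈ offT k (i.val) := by
  simp only [offT, Finset.mem_filter, Finset.mem_univ, true_and] at ht ⊢
  intro hcon
  apply ht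
  funext s
  exact Subtype.ext (congrFun hcon s)

lemma betaT_nonneg {ι : Type*} [Fintype ι] [DecidableEq ι]
    (B : ι → (Fin k → ι) → ℝ) (i : ι) : 0 ≤ betaT B i :=
  Finset.le_max' _ _ (Finset.mem_insert_self _ _)

lemma le_betaT {ι : Type*} [Fintype ι] [DecidableEq ι]
    (B : ι → (Fin k → ι) → ℝ) (i : ι) {t : Fin k → ι} (ht : t ∈ offT k i) :
    B i t ≤ betaT B i :=
  Finset.le_max' _ _ (Finset.mem_insert_of_mem (Finset.mem_image_of_mem _ ht))

lemma deltaT_nonneg {ι : Type*} [Fintype ι] [DecidableEq ι]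
    (B : ι → (Fin k → ι) → ℝ) (i : ι) : 0 ≤ deltaT B i :=
  Finset.sum_nonneg fun t ht => sub_nonneg.2 (le_betaT B i ht)

lemma diagT_res (B : Fin n → (Fin k → Fin n) → ℝ) (α : Finset (Fin n))
    (i : {x // x ∈ α}) : diagT (resT B α) i = diagT B i.val := rfl

lemma betaT_res_le (B : Fin n → (Fin k → Fin n) → ℝ) (α : Finset (Fin n))
    (i : {x // x ∈ α}) : betaT (resT B α) i ≤ betaT B i.val := by
  apply Finset.max'_le
  intro y hy
  rcases Finset.mem_insert.1 hy with h0 | hmem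
  · exact h0 ▸ betaT_nonneg B i.val
  · rcases Finset.mem_image.1 hmem with ⟨t, ht, rfl⟩
    exact le_betaT B i.val (valcomp_mem_offT ht)

lemma deltaT_res_le (B : Fin n → (Fin k → Fin n) → ℝ) (α : Finset (Fin n))
    (i : {x // x ∈ α}) : deltaT (resT B α) i ≤ deltaT B i.val := by
  unfold deltaT
  have hstep : ∑ t ∈ offT k i, (betaT (resT B α) i - resT B α i t)
      ≤ ∑ t ∈ offT k i, (betaT B i.val - B i.val (fun s => (t s).val)) := by
    apply Finset.sum_le_sum
    intro t ht
    exact sub_le_sub (betaT_res_le B α i) (le_refl _)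
  refine hstep.trans ?_
  have hinj : ∀ t₁ ∈ offT k i, ∀ t₂ ∈ offT k i,
      (fun s => ((t₁ s : {x // x ∈ α})).val) = (fun s => (t₂ s).val) → t₁ = t₂ := by
    intro t₁ _ t₂ _ heq
    funext s
    exact Subtype.ext (congrFun heq s)
  have hre : ∑ u ∈ (offT k i).image (fun (t : Fin k → {x // x ∈ α}) (s : Fin k) => (t s).val),
      (betaT B i.val - B i.val u)
      = ∑ t ∈ offT k i, (betaT B i.val - B i.val (fun s => (t s).val)) :=
    Finset.sum_image hinj
  rw [← hre]
  apply Finset.sum_le_sum_of_subset_of_nonneg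
  · intro u hu
    rcases Finset.mem_image.1 hu with ⟨t, ht, rfl⟩
    exact valcomp_mem_offT ht
  · intro u hu _
    exact sub_nonneg.2 (le_betaT B i.val hu)

lemma barT_res (A : Fin n → (Fin k → Fin n) → ℝ) (α : Finset (Fin n)) :
    barT (fun (i : {x // x ∈ α}) (t : Fin k → {x // x ∈ α}) =>
      A i.val (fun s => (t s).val)) = resT (barT A) α := rfl

end Aux

/-- Principal subtensors of double `B̄`-tensors are double `B̄`-tensors. -/
theorem stmt9 {n k : ℕ} (A : Fin n → (Fin k → Fin n) → ℝ) (h : DoubleB (barT A))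
    (α : Finset (Fin n)) (hα : α.Nonempty) :
    DoubleB (barT (fun (i : {x // x ∈ α}) (t : Fin k → {x // x ∈ α}) =>
      A i.val (fun s => (t s).val))) := by
  rw [barT_res]
  obtain ⟨h1, h2, h3⟩ := h
  refine ⟨fun i => ?_, fun i => ?_, fun i j hij => ?_⟩
  · exact lt_of_le_of_lt (betaT_res_le _ α i) (by rw [diagT_res]; exact h1 i.val)
  · calc deltaT (resT (barT A) α) i ≤ deltaT (barT A) i.val := deltaT_res_le _ α i
      _ ≤ diagT (barT A) i.val - betaT (barT A) i.val := h2 i.val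
      _ ≤ diagT (resT (barT A) α) i - betaT (resT (barT A) α) i := by
          rw [diagT_res]; exact sub_le_sub (le_refl _) (betaT_res_le _ α i)
  · have hij' : i.val ≠ j.val := fun hc => hij (Subtype.ext hc)
    calc deltaT (resT (barT A) α) i * deltaT (resT (barT A) α) j
        ≤ deltaT (barT A) i.val * deltaT (barT A) j.val :=
          mul_le_mul (deltaT_res_le _ α i) (deltaT_res_le _ α j)
            (deltaT_nonneg _ j) (deltaT_nonneg _ i.val)
      _ < (diagT (barT A) i.val - betaT (barT A) i.val) *
            (diagT (barT A) j.val - betaT (barT A) j.val) := h3 i.val j.val hij'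
      _ ≤ (diagT (resT (barT A) α) i - betaT (resT (barT A) α) i) *
            (diagT (resT (barT A) α) j - betaT (resT (barT A) α) j) := by
          rw [diagT_res, diagT_res]
          apply mul_le_mul
          · exact sub_le_sub (le_refl _) (betaT_res_le _ α i)
          · exact sub_le_sub (le_refl _) (betaT_res_le _ α j)
          · exact sub_nonneg.2 (le_of_lt (h1 j.val))
          · exact sub_nonneg.2 (le_of_lt ((betaT_res_le _ α i).trans_lt
              (by rw [← diagT_res (barT A) α i] at *; exact h1 i.val)))
end
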